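/- Let F ⊆ ℝ^n be a nonempty convex polyhedron and let U, V ⊆ ℝ^n be polyhedra. Call a set W ⊆ ℝ^n τ-closed if (i) U ⊆ W, (ii) W is a finite union of convex polyhedra, and (iii) for all convex polyhedra P ⊆ ℝ^n \ V and Q ⊆ W, P ∩ preflow_F(bound(P, Q) ∩ preflow_F(Q)) ⊆ W. Then prwa_F(U, V) is τ-closed and is contained in every τ-closed set; that is, prwa_F(U, V) is the least τ-closed subset of ℝ^n. -/

import Mathlib

open Set

/-- Points of `ℝ^n`. -/
abbrev Vec (n : ℕ) := Fin n → ℝ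

/-- A (strict or non-strict) affine half-space of `ℝ^ι`. -/
def IsHalfspace {ι : Type} [Fintype ι] (H : Set (ι → ℝ)) : Prop :=
  ∃ (a : ι → ℝ) (b : ℝ), H = {x | (∑ i, a i * x i) < b} ∨ H = {x | (∑ i, a i * x i) ≤ b}

/-- A convex polyhedron: a finite intersection of half-spaces. -/
def IsConvexPolyhedron {ι : Type} [Fintype ι] (P : Set (ι → ℝ)) : Prop :=
  ∃ (k : ℕ) (Hs : Fin k → Set (ι → ℝ)), (∀ i, IsHalfspace (Hs i)) ∧ P = ⋂ i, Hs i

/-- A polyhedron: a finite union of convex polyhedra. -/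
def IsPolyhedron {ι : Type} [Fintype ι] (G : Set (ι → ℝ)) : Prop :=
  ∃ (k : ℕ) (Ps : Fin k → Set (ι → ℝ)), (∀ i, IsConvexPolyhedron (Ps i)) ∧ G = ⋃ i, Ps i

/-- The pre-flow of `G` with respect to `F`:
`preflow_F(G) = {u | ∃ δ ≥ 0, ∃ c ∈ F, u + δ·c ∈ G}`. -/
def preflow {n : ℕ} (F G : Set (Vec n)) : Set (Vec n) :=
  {u | ∃ δ : ℝ, 0 ≤ δ ∧ ∃ c ∈ F, u + δ • c ∈ G}

/-- The boundary of two sets: `bound(G, G') = (closure G ∩ G') ∪ (G ∩ closure G')`. -/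
def bnd {n : ℕ} (G G' : Set (Vec n)) : Set (Vec n) :=
  (closure G ∩ G') ∪ (G ∩ closure G')

/-- `prwa_F(U, V)`: the points from which a piecewise straight-line trajectory with slopes
in `F` reaches `U`, every point along the way (except possibly the final one) lying in
`(ℝ^n \ V) ∪ U`. -/
def prwa {n : ℕ} (F U V : Set (Vec n)) : Set (Vec n) :=
  {u | ∃ (k : ℕ) (d : Fin k → ℝ) (c : Fin k → Vec n) (p : Fin (k + 1) → Vec n),
    (∀ i, 0 ≤ d i) ∧ (∀ i, c i ∈ F) ∧ p 0 = u ∧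
    (∀ i : Fin k, p i.succ = p i.castSucc + d i • c i) ∧
    p (Fin.last k) ∈ U ∧
    ∀ (i : Fin k) (t : ℝ), 0 ≤ t → t ≤ d i →
      p i.castSucc + t • c i = p (Fin.last k) ∨ p i.castSucc + t • c i ∈ Vᶜ ∪ U}

/-- `rwa_F(U, V)`: the points from which some differentiable trajectory with derivative in
`F` may reach `U` while staying in `(ℝ^n \ V) ∪ U` beforehand. -/
def rwaSet {n : ℕ} (F U V : Set (Vec n)) : Set (Vec n) :=
  {u | ∃ f : ℝ → Vec n, Differentiable ℝ f ∧ f 0 = u ∧ (∀ t, 0 ≤ t → deriv f t ∈ F) ∧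
    ∃ δ : ℝ, 0 ≤ δ ∧ f δ ∈ U ∧ ∀ δ', 0 ≤ δ' → δ' < δ → f δ' ∈ Vᶜ ∪ U}

/-- `W` is `τ`-closed (for the operator `τ(U,V,·)`): it contains `U`, is a finite union of
convex polyhedra, and is closed under adding the points of any convex polyhedron
`P ⊆ ℝ^n \ V` that may reach an entry region of a convex polyhedron `Q ⊆ W`. -/
def TauClosed {n : ℕ} (F U V W : Set (Vec n)) : Prop :=
  U ⊆ W ∧ IsPolyhedron W ∧
  ∀ P Q : Set (Vec n), IsConvexPolyhedron P → P ⊆ Vᶜ → IsConvexPolyhedron Q → Q ⊆ W →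
    P ∩ preflow F (bnd P Q ∩ preflow F Q) ⊆ W


/-- `rel true` is `<`, `rel false` is `≤`. -/
def rel (s : Bool) (a b : ℝ) : Prop := cond s (a < b) (a ≤ b)

lemma rel_true {a b : ℝ} : rel true a b ↔ a < b := Iff.rfl
lemma rel_false {a b : ℝ} : rel false a b ↔ a ≤ b := Iff.rfl

lemma rel.le {s : Bool} {a b : ℝ} (h : rel s a b) : a ≤ b := by
  cases s with
  | false => exact h
  | true => exact le_of_lt h

lemma rel_of_lt {s : Bool} {a b : ℝ} (h : a < b) : rel s a b := by
  cases s with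
  | false => exact le_of_lt h
  | true => exact h

lemma rel_add {s t : Bool} {a b c d : ℝ} (h1 : rel s a b) (h2 : rel t c d) :
    rel (s || t) (a + c) (b + d) := by
  cases s with
  | false => cases t with
    | false => exact add_le_add h1 h2
    | true => exact add_lt_add_of_le_of_lt h1 h2
  | true => exact add_lt_add_of_lt_of_le h1 h2.le

lemma rel_smul_pos {s : Bool} {k a b : ℝ} (hk : 0 < k) (h : rel s a b) :
    rel s (k * a) (k * b) := by
  cases s
  · exact mul_le_mul_of_nonneg_left h hk.le
  · exact (mul_lt_mul_iff_right₀ hk).2 h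

lemma rel_smul_pos_iff {s : Bool} {k a b : ℝ} (hk : 0 < k) :
    rel s (k * a) (k * b) ↔ rel s a b := by
  cases s
  · exact mul_le_mul_iff_right₀ hk
  · exact mul_lt_mul_iff_right₀ hk

/-- The halfspace determined by data `(a, b, s)`. -/
def hsSet {ι : Type} [Fintype ι] (a : ι → ℝ) (b : ℝ) (s : Bool) : Set (ι → ℝ) :=
  {x | rel s (∑ i, a i * x i) b}

lemma mem_hsSet {ι : Type} [Fintype ι] {a : ι → ℝ} {b : ℝ} {s : Bool} {x : ι → ℝ} :
    x ∈ hsSet a b s ↔ rel s (∑ i, a i * x i) b := Iff.rfl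

lemma isHalfspace_hsSet {ι : Type} [Fintype ι] (a : ι → ℝ) (b : ℝ) (s : Bool) :
    IsHalfspace (hsSet a b s) := by
  refine ⟨a, b, ?_⟩
  cases s
  · exact Or.inr rfl
  · exact Or.inl rfl

lemma isHalfspace_iff {ι : Type} [Fintype ι] {H : Set (ι → ℝ)} :
    IsHalfspace H ↔ ∃ (a : ι → ℝ) (b : ℝ) (s : Bool), H = hsSet a b s := by
  constructor
  · rintro ⟨a, b, h | h⟩
    · exact ⟨a, b, true, h⟩
    · exact ⟨a, b, false, h⟩
  · rintro ⟨a, b, s, rfl⟩; exact isHalfspace_hsSet a b s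

/-- A convex polyhedron in "system" form. -/
lemma isConvexPolyhedron_iff {ι : Type} [Fintype ι] {P : Set (ι → ℝ)} :
    IsConvexPolyhedron P ↔ ∃ (k : ℕ) (a : Fin k → ι → ℝ) (b : Fin k → ℝ) (s : Fin k → Bool),
      P = ⋂ i, hsSet (a i) (b i) (s i) := by
  constructor
  · rintro ⟨k, Hs, hHs, rfl⟩
    have h : ∀ i, ∃ a b s, Hs i = hsSet a b s := fun i => isHalfspace_iff.1 (hHs i)
    choose a b s hs using h
    exact ⟨k, a, b, s, by simp only [hs]⟩
  · rintro ⟨k, a, b, s, rfl⟩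
    exact ⟨k, _, fun i => isHalfspace_hsSet _ _ _, rfl⟩

section Basic
variable {ι : Type} [Fintype ι]

lemma isLinearMap_hs (a : ι → ℝ) : IsLinearMap ℝ (fun x : ι → ℝ => ∑ i, a i * x i) := by
  constructor
  · intro x y; simp [mul_add, Finset.sum_add_distrib]
  · intro c x; simp [Finset.mul_sum, mul_left_comm]

lemma hsSet_convex (a : ι → ℝ) (b : ℝ) (s : Bool) : Convex ℝ (hsSet a b s) := by
  cases s
  · exact convex_halfSpace_le (isLinearMap_hs a) b
  · exact convex_halfSpace_lt (isLinearMap_hs a) b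

lemma IsConvexPolyhedron.convex {P : Set (ι → ℝ)} (h : IsConvexPolyhedron P) : Convex ℝ P := by
  obtain ⟨k, a, b, s, rfl⟩ := isConvexPolyhedron_iff.1 h
  exact convex_iInter fun i => hsSet_convex _ _ _

lemma isConvexPolyhedron_univ : IsConvexPolyhedron (univ : Set (ι → ℝ)) :=
  ⟨0, fun i => i.elim0, fun i => i.elim0, by simp⟩

lemma isConvexPolyhedron_empty : IsConvexPolyhedron (∅ : Set (ι → ℝ)) := by
  refine ⟨1, fun _ => hsSet 0 0 true, fun _ => isHalfspace_hsSet _ _ _, ?_⟩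
  ext x; simp [hsSet, rel]

lemma IsConvexPolyhedron.inter {P Q : Set (ι → ℝ)} (hP : IsConvexPolyhedron P)
    (hQ : IsConvexPolyhedron Q) : IsConvexPolyhedron (P ∩ Q) := by
  obtain ⟨k, Hs, hHs, rfl⟩ := hP
  obtain ⟨l, Gs, hGs, rfl⟩ := hQ
  refine ⟨k + l, fun i => Sum.elim Hs Gs (finSumFinEquiv.symm i), fun i => ?_, ?_⟩
  · simp only
    rcases finSumFinEquiv.symm i with j | j <;> [exact hHs j; exact hGs j]
  · ext x
    simp only [mem_inter_iff, mem_iInter]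
    rw [← (finSumFinEquiv (m := k) (n := l)).forall_congr_right]
    simp [Sum.forall]

/-- Intersection over an arbitrary fintype of convex polyhedra. -/
lemma isConvexPolyhedron_iInter {κ : Type} [Fintype κ] {Ps : κ → Set (ι → ℝ)}
    (h : ∀ i, IsConvexPolyhedron (Ps i)) : IsConvexPolyhedron (⋂ i, Ps i) := by
  classical
  have : ∀ (s : Finset κ), IsConvexPolyhedron (⋂ i ∈ s, Ps i) := by
    intro s
    induction s using Finset.induction with
    | empty => simpa using isConvexPolyhedron_univ
    | insert _ _ hx ih =>
      rw [Finset.set_biInter_insert]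
      exact (h _).inter ih
  have := this Finset.univ
  simpa using this

/-- Union over an arbitrary fintype of convex polyhedra is a polyhedron. -/
lemma isPolyhedron_iUnion {κ : Type} [Fintype κ] {Ps : κ → Set (ι → ℝ)}
    (h : ∀ i, IsConvexPolyhedron (Ps i)) : IsPolyhedron (⋃ i, Ps i) := by
  classical
  obtain ⟨e⟩ := Fintype.truncEquivFin κ
  refine ⟨Fintype.card κ, fun i => Ps (e.symm i), fun i => h _, ?_⟩
  ext x; simp only [mem_iUnion]
  exact ⟨fun ⟨i, hi⟩ => ⟨e i, by simpa using hi⟩, fun ⟨i, hi⟩ => ⟨e.symm i, hi⟩⟩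

lemma IsConvexPolyhedron.isPolyhedron {P : Set (ι → ℝ)} (h : IsConvexPolyhedron P) :
    IsPolyhedron P := ⟨1, fun _ => P, fun _ => h, (iUnion_const P).symm⟩

lemma isPolyhedron_union_fintype {κ : Type} [Fintype κ] {Ps : κ → Set (ι → ℝ)}
    (h : ∀ i, IsPolyhedron (Ps i)) : IsPolyhedron (⋃ i, Ps i) := by
  classical
  choose k Qs hQs hPs using h
  have : (⋃ i, Ps i) = ⋃ p : Σ i : κ, Fin (k i), Qs p.1 p.2 := by
    ext x
    simp only [mem_iUnion, Sigma.exists]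
    constructor
    · rintro ⟨i, hi⟩; rw [hPs i] at hi; obtain ⟨j, hj⟩ := mem_iUnion.1 hi; exact ⟨i, j, hj⟩
    · rintro ⟨i, j, hj⟩; exact ⟨i, by rw [hPs i]; exact mem_iUnion.2 ⟨j, hj⟩⟩
  rw [this]
  exact isPolyhedron_iUnion fun p => hQs p.1 p.2

lemma IsPolyhedron.union {P Q : Set (ι → ℝ)} (hP : IsPolyhedron P) (hQ : IsPolyhedron Q) :
    IsPolyhedron (P ∪ Q) := by
  have : P ∪ Q = ⋃ b : Bool, (if b then P else Q) := by
    ext x; simp [or_comm, Bool.exists_bool]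
  rw [this]
  exact isPolyhedron_union_fintype (by rintro (_ | _) <;> simp [hP, hQ])

lemma IsPolyhedron.inter {P Q : Set (ι → ℝ)} (hP : IsPolyhedron P) (hQ : IsPolyhedron Q) :
    IsPolyhedron (P ∩ Q) := by
  obtain ⟨k, Ps, hPs, rfl⟩ := hP
  obtain ⟨l, Qs, hQs, rfl⟩ := hQ
  have : (⋃ i, Ps i) ∩ (⋃ j, Qs j) = ⋃ p : Fin k × Fin l, (Ps p.1 ∩ Qs p.2) := by
    ext x; simp only [mem_inter_iff, mem_iUnion, Prod.exists]; tauto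
  rw [this]
  exact isPolyhedron_iUnion fun p => (hPs p.1).inter (hQs p.2)

lemma isPolyhedron_iInter {κ : Type} [Fintype κ] {Ps : κ → Set (ι → ℝ)}
    (h : ∀ i, IsPolyhedron (Ps i)) : IsPolyhedron (⋂ i, Ps i) := by
  classical
  have : ∀ (s : Finset κ), IsPolyhedron (⋂ i ∈ s, Ps i) := by
    intro s
    induction s using Finset.induction with
    | empty => simpa using isConvexPolyhedron_univ.isPolyhedron
    | insert _ _ hx ih => rw [Finset.set_biInter_insert]; exact (h _).inter ih
  simpa using this Finset.univ

lemma IsHalfspace.compl {H : Set (ι → ℝ)} (h : IsHalfspace H) : IsHalfspace Hᶜ := by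
  obtain ⟨a, b, s, rfl⟩ := isHalfspace_iff.1 h
  refine isHalfspace_iff.2 ⟨-a, -b, !s, ?_⟩
  ext x
  simp only [mem_compl_iff, mem_hsSet, rel, hsSet, mem_setOf_eq]
  have : (∑ i, (-a) i * x i) = -∑ i, a i * x i := by simp [Finset.sum_neg_distrib, neg_mul]
  rw [this]
  cases s <;> simp [not_le, not_lt, neg_le_neg_iff, neg_lt_neg_iff]

lemma IsPolyhedron.compl {P : Set (ι → ℝ)} (h : IsPolyhedron P) : IsPolyhedron Pᶜ := by
  obtain ⟨k, Ps, hPs, rfl⟩ := h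
  rw [compl_iUnion]
  refine isPolyhedron_iInter fun i => ?_
  obtain ⟨l, Hs, hHs, heq⟩ := hPs i
  rw [heq, compl_iInter]
  exact isPolyhedron_iUnion fun j =>
    ⟨1, fun _ => (Hs j)ᶜ, fun _ => (hHs j).compl, (iInter_const _).symm⟩

end Basic


section Closure
variable {ι : Type} [Fintype ι]

lemma continuous_hs (a : ι → ℝ) : Continuous (fun x : ι → ℝ => ∑ i, a i * x i) := by
  exact continuous_finset_sum _ fun i _ => continuous_const.mul (continuous_apply i)

lemma isClosed_hsSet_false (a : ι → ℝ) (b : ℝ) : IsClosed (hsSet a b false) :=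
  isClosed_le (continuous_hs a) continuous_const

lemma hsSet_subset_relax (a : ι → ℝ) (b : ℝ) (s : Bool) : hsSet a b s ⊆ hsSet a b false := by
  intro x hx
  have := rel.le (mem_hsSet.1 hx)
  exact mem_hsSet.2 this

lemma closure_hsSet_subset (a : ι → ℝ) (b : ℝ) (s : Bool) :
    closure (hsSet a b s) ⊆ hsSet a b false :=
  closure_minimal (hsSet_subset_relax a b s) (isClosed_hsSet_false a b)

lemma chord_mem_hsSet {a : ι → ℝ} {b : ℝ} {s : Bool} {x y : ι → ℝ}
    (hx : x ∈ hsSet a b s) (hy : (∑ i, a i * y i) ≤ b) {t : ℝ} (h0 : 0 ≤ t) (h1 : t < 1) :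
    x + t • (y - x) ∈ hsSet a b s := by
  have hl := isLinearMap_hs a
  have hval : (∑ i, a i * (x + t • (y - x)) i) =
      (1 - t) * (∑ i, a i * x i) + t * (∑ i, a i * y i) := by
    rw [hl.map_add, hl.map_smul, hl.map_sub, smul_eq_mul]
    ring
  have hx' := mem_hsSet.1 hx
  rw [mem_hsSet, hval]
  have h1t : 0 < 1 - t := by linarith
  have hb : b = (1 - t) * b + t * b := by ring
  rw [hb]
  cases s with
  | false =>
    rw [rel_false] at hx' ⊢
    exact add_le_add (mul_le_mul_of_nonneg_left hx' h1t.le)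
      (mul_le_mul_of_nonneg_left hy h0)
  | true =>
    rw [rel_true] at hx' ⊢
    exact add_lt_add_of_lt_of_le ((mul_lt_mul_iff_right₀ h1t).2 hx')
      (mul_le_mul_of_nonneg_left hy h0)

lemma IsConvexPolyhedron.chord {P : Set (ι → ℝ)} (hP : IsConvexPolyhedron P) {x y : ι → ℝ}
    (hx : x ∈ P) (hy : y ∈ closure P) {t : ℝ} (h0 : 0 ≤ t) (h1 : t < 1) :
    x + t • (y - x) ∈ P := by
  obtain ⟨k, a, b, s, rfl⟩ := isConvexPolyhedron_iff.1 hP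
  rw [mem_iInter]
  intro i
  refine chord_mem_hsSet (mem_iInter.1 hx i) ?_ h0 h1
  have : closure (⋂ j, hsSet (a j) (b j) (s j)) ⊆ hsSet (a i) (b i) false := by
    refine subset_trans (closure_mono (iInter_subset _ i)) (closure_hsSet_subset _ _ _)
  exact this hy

lemma IsConvexPolyhedron.closure_cp {P : Set (ι → ℝ)} (hP : IsConvexPolyhedron P) :
    IsConvexPolyhedron (closure P) := by
  by_cases hne : P.Nonempty
  · obtain ⟨k, a, b, s, rfl⟩ := isConvexPolyhedron_iff.1 hP
    refine isConvexPolyhedron_iff.2 ⟨k, a, b, fun _ => false, ?_⟩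
    apply Subset.antisymm
    · exact closure_minimal (iInter_mono fun i => hsSet_subset_relax _ _ _)
        (isClosed_iInter fun i => isClosed_hsSet_false _ _)
    · intro y hy
      obtain ⟨x, hx⟩ := hne
      have hyr : ∀ i, (∑ j, a i j * y j) ≤ b i := fun i => (mem_iInter.1 hy i)
      have hseq : ∀ m : ℕ, x + (1 - 1/(m+1 : ℝ)) • (y - x) ∈ ⋂ i, hsSet (a i) (b i) (s i) := by
        intro m
        rw [mem_iInter]
        intro i
        refine chord_mem_hsSet (mem_iInter.1 hx i) (hyr i) ?_ ?_
        · have : (1:ℝ)/(m+1) ≤ 1 := by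
            rw [div_le_one (by positivity)]; linarith
          linarith
        · have : (0:ℝ) < 1/(m+1) := by positivity
          linarith
      have h1 : Filter.Tendsto (fun m : ℕ => 1 - 1/(m+1 : ℝ)) Filter.atTop (nhds 1) := by
        have := tendsto_one_div_add_atTop_nhds_zero_nat (𝕜 := ℝ)
        have h2 := Filter.Tendsto.const_sub (1:ℝ) this
        simpa using h2
      have htend : Filter.Tendsto (fun m : ℕ => x + (1 - 1/(m+1 : ℝ)) • (y - x))
          Filter.atTop (nhds y) := by
        have := Filter.Tendsto.const_add x ((h1.smul_const (y - x)))
        simpa using this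
      exact mem_closure_of_tendsto htend (Filter.Eventually.of_forall hseq)
  · rw [not_nonempty_iff_eq_empty] at hne
    rw [hne, closure_empty]
    exact isConvexPolyhedron_empty

/-- Parametrized chord lemma, forward. -/
lemma IsConvexPolyhedron.seg_mem {P : Set (ι → ℝ)} (hP : IsConvexPolyhedron P) {u c : ι → ℝ}
    {δ t : ℝ} (hu : u ∈ P) (hend : u + δ • c ∈ closure P) (h0 : 0 ≤ t) (h1 : t < δ) :
    u + t • c ∈ P := by
  have hδ : 0 < δ := lt_of_le_of_lt h0 h1
  have := hP.chord hu hend (t := t/δ) (by positivity) (by rw [div_lt_one hδ]; exact h1)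
  have heq : u + (t/δ) • (u + δ • c - u) = u + t • c := by
    rw [add_sub_cancel_left, smul_smul, div_mul_cancel₀ _ hδ.ne']
  rwa [heq] at this

/-- Parametrized chord lemma, backward: if the start is only in the closure but
the endpoint is in `Q`, all intermediate points from positive time on are in `Q`. -/
lemma IsConvexPolyhedron.seg_mem' {Q : Set (ι → ℝ)} (hQ : IsConvexPolyhedron Q) {z c : ι → ℝ}
    {δ t : ℝ} (hz : z ∈ closure Q) (hend : z + δ • c ∈ Q) (h0 : 0 < t) (h1 : t ≤ δ) :
    z + t • c ∈ Q := by
  have hδ : 0 < δ := lt_of_lt_of_le h0 h1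
  have := hQ.chord hend hz (t := 1 - t/δ)
    (by have : t/δ ≤ 1 := by rw [div_le_one hδ]; exact h1
        linarith)
    (by have : 0 < t/δ := by positivity
        linarith)
  have heq : z + δ • c + (1 - t/δ) • (z - (z + δ • c)) = z + t • c := by
    have : z - (z + δ • c) = -(δ • c) := by abel
    rw [this, smul_neg, smul_smul]
    rw [sub_mul, one_mul, div_mul_cancel₀ _ hδ.ne']
    have : (δ - t) • c = δ • c - t • c := sub_smul δ t c
    rw [this]
    abel
  rwa [heq] at this

end Closure


section FM
variable {ι : Type} [Fintype ι]

lemma isConvexPolyhedron_hsSet (a : ι → ℝ) (b : ℝ) (s : Bool) :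
    IsConvexPolyhedron (hsSet a b s) :=
  ⟨1, fun _ => hsSet a b s, fun _ => isHalfspace_hsSet a b s, (iInter_const _).symm⟩

lemma rel_upper {s : Bool} {α t f B : ℝ} (hα : 0 < α) :
    rel s (α * t + f) B ↔ rel s t ((B - f) / α) := by
  cases s with
  | false =>
    rw [rel_false, rel_false, le_div_iff₀ hα]
    constructor <;> intro h <;> nlinarith
  | true =>
    rw [rel_true, rel_true, lt_div_iff₀ hα]
    constructor <;> intro h <;> nlinarith

lemma rel_lower {s : Bool} {α t f B : ℝ} (hα : α < 0) :
    rel s (α * t + f) B ↔ rel s ((B - f) / α) t := by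
  cases s with
  | false =>
    rw [rel_false, rel_false, div_le_iff_of_neg hα]
    constructor <;> intro h <;> nlinarith
  | true =>
    rw [rel_true, rel_true, div_lt_iff_of_neg hα]
    constructor <;> intro h <;> nlinarith

lemma rel_or_comm {s t : Bool} {a b : ℝ} : rel (s || t) a b ↔ rel (t || s) a b := by
  cases s <;> cases t <;> rfl

lemma rel_trans_le {s : Bool} {a b c : ℝ} (h1 : rel s a b) (h2 : b ≤ c) : rel s a c := by
  cases s with
  | false => exact le_trans h1 h2
  | true => exact lt_of_lt_of_le h1 h2

lemma le_rel_trans {s : Bool} {a b c : ℝ} (h1 : a ≤ b) (h2 : rel s b c) : rel s a c := by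
  cases s with
  | false => exact le_trans h1 h2
  | true => exact lt_of_le_of_lt h1 h2

/-- One-variable Fourier–Motzkin elimination. -/
lemma proj_one {S : Set ((ι ⊕ PUnit) → ℝ)} (hS : IsConvexPolyhedron S) :
    IsConvexPolyhedron {x : ι → ℝ | ∃ t : ℝ, Sum.elim x (fun _ => t) ∈ S} := by
  classical
  obtain ⟨k, A, B, str, rfl⟩ := isConvexPolyhedron_iff.1 hS
  set α : Fin k → ℝ := fun i => A i (Sum.inr PUnit.unit) with hα
  set f : Fin k → (ι → ℝ) → ℝ := fun i x => ∑ j, A i (Sum.inl j) * x j with hf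
  have hmem : ∀ (i : Fin k) (x : ι → ℝ) (t : ℝ),
      Sum.elim x (fun _ => t) ∈ hsSet (A i) (B i) (str i) ↔
      rel (str i) (α i * t + f i x) (B i) := by
    intro i x t
    rw [mem_hsSet]
    have : (∑ w : ι ⊕ PUnit, A i w * Sum.elim x (fun _ => t) w) = α i * t + f i x := by
      rw [Fintype.sum_sum_type]
      simp only [Sum.elim_inl, Sum.elim_inr]
      rw [add_comm]
      congr 1
      simp [hα]
    rw [this]
  -- the projected system
  set T : Set (ι → ℝ) :=
    (⋂ i : Fin k, if α i = 0 then hsSet (fun j => A i (Sum.inl j)) (B i) (str i) else univ) ∩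
    (⋂ p : Fin k × Fin k, if 0 < α p.1 ∧ α p.2 < 0 then
        hsSet (fun m => α p.1 * A p.2 (Sum.inl m) - α p.2 * A p.1 (Sum.inl m))
          (α p.1 * B p.2 - α p.2 * B p.1) (str p.1 || str p.2) else univ) with hT
  have hTmem : ∀ x : ι → ℝ, x ∈ T ↔
      ((∀ i, α i = 0 → rel (str i) (f i x) (B i)) ∧
       (∀ i j, 0 < α i → α j < 0 →
          rel (str i || str j) (α i * f j x - α j * f i x) (α i * B j - α j * B i))) := by
    intro x
    rw [hT]
    simp only [mem_inter_iff, mem_iInter]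
    constructor
    · rintro ⟨h1, h2⟩
      constructor
      · intro i hi
        have := h1 i
        rw [if_pos hi] at this
        have h' := mem_hsSet.1 this
        convert h' using 2
      · intro i j hi hj
        have := h2 (i, j)
        rw [if_pos ⟨hi, hj⟩] at this
        have h' := mem_hsSet.1 this
        have : (∑ m, (α i * A j (Sum.inl m) - α j * A i (Sum.inl m)) * x m) =
            α i * f j x - α j * f i x := by
          rw [hf]
          simp only
          rw [Finset.mul_sum, Finset.mul_sum, ← Finset.sum_sub_distrib]
          congr 1; ext m; ring
        rwa [this] at h'
    · rintro ⟨h1, h2⟩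
      refine ⟨fun i => ?_, fun p => ?_⟩
      · by_cases hi : α i = 0
        · rw [if_pos hi]
          exact mem_hsSet.2 (h1 i hi)
        · rw [if_neg hi]; trivial
      · by_cases hp : 0 < α p.1 ∧ α p.2 < 0
        · rw [if_pos hp]
          refine mem_hsSet.2 ?_
          have h' := h2 p.1 p.2 hp.1 hp.2
          have heq : (∑ m, (α p.1 * A p.2 (Sum.inl m) - α p.2 * A p.1 (Sum.inl m)) * x m) =
              α p.1 * f p.2 x - α p.2 * f p.1 x := by
            rw [hf]
            simp only
            rw [Finset.mul_sum, Finset.mul_sum, ← Finset.sum_sub_distrib]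
            congr 1; ext m; ring
          rwa [heq]
        · rw [if_neg hp]; trivial
  have hCP : IsConvexPolyhedron T := by
    refine IsConvexPolyhedron.inter (isConvexPolyhedron_iInter fun i => ?_)
      (isConvexPolyhedron_iInter fun p => ?_)
    · split
      · exact isConvexPolyhedron_hsSet _ _ _
      · exact isConvexPolyhedron_univ
    · split
      · exact isConvexPolyhedron_hsSet _ _ _
      · exact isConvexPolyhedron_univ
  have hset : {x : ι → ℝ | ∃ t : ℝ, Sum.elim x (fun _ => t) ∈
      ⋂ i, hsSet (A i) (B i) (str i)} = T := by
    ext x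
    rw [mem_setOf_eq, hTmem]
    constructor
    · rintro ⟨t, ht⟩
      rw [mem_iInter] at ht
      have hall : ∀ i, rel (str i) (α i * t + f i x) (B i) := fun i => (hmem i x t).1 (ht i)
      constructor
      · intro i hi
        have := hall i
        rwa [hi, zero_mul, zero_add] at this
      · intro i j hi hj
        have h1 := hall i
        have h2 := hall j
        -- multiply h2 by α i > 0, h1 by -α j > 0 and add
        have h2' := rel_smul_pos hi h2
        have h1' := rel_smul_pos (neg_pos.2 hj) h1
        have hadd := rel_add h2' h1'
        rw [rel_or_comm] at hadd
        have e1 : α i * (α j * t + f j x) + -α j * (α i * t + f i x)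
            = α i * f j x - α j * f i x := by ring
        have e2 : α i * B j + -α j * B i = α i * B j - α j * B i := by ring
        rwa [e1, e2] at hadd
    · rintro ⟨hz, hpair⟩
      -- find a witness t
      set Low : Finset (Fin k) := Finset.univ.filter (fun i => α i < 0) with hLow
      set Up : Finset (Fin k) := Finset.univ.filter (fun i => 0 < α i) with hUp
      set val : Fin k → ℝ := fun i => (B i - f i x) / α i with hval
      have key : ∀ t : ℝ, (∀ i ∈ Up, rel (str i) t (val i)) →
          (∀ j ∈ Low, rel (str j) (val j) t) → ∃ t', ∀ i, Sum.elim x (fun _ => t') ∈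
            hsSet (A i) (B i) (str i) := by
        intro t hup hlow
        refine ⟨t, fun i => (hmem i x t).2 ?_⟩
        rcases lt_trichotomy (α i) 0 with h | h | h
        · exact (rel_lower h).2 (hlow i (by simp [hLow, h]))
        · rw [h, zero_mul, zero_add]; exact hz i h
        · exact (rel_upper h).2 (hup i (by simp [hUp, h]))
      have hpair' : ∀ i ∈ Up, ∀ j ∈ Low, rel (str i || str j) (val j) (val i) := by
        intro i hi j hj
        rw [hUp, Finset.mem_filter] at hi
        rw [hLow, Finset.mem_filter] at hj
        have h := hpair i j hi.2 hj.2
        have hprod : 0 < α i * (-α j) := mul_pos hi.2 (neg_pos.2 hj.2)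
        have hji : α j ≠ 0 := ne_of_lt hj.2
        have hii : α i ≠ 0 := ne_of_gt hi.2
        rw [← rel_smul_pos_iff (s := str i || str j)
          (a := val j) (b := val i) hprod]
        have e1 : α i * -α j * val j = (α i * f j x - α j * f i x) + (α j * f i x - α i * B j) := by
          rw [hval]; field_simp; ring
        have e2 : α i * -α j * val i = (α i * B j - α j * B i) + (α j * f i x - α i * B j) := by
          rw [hval]; field_simp; ring
        rw [e1, e2]
        revert h
        cases (str i || str j) <;> intro h
        · rw [rel_false] at h ⊢; linarith
        · rw [rel_true] at h ⊢; linarith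
      -- choose the witness t
      rcases Finset.eq_empty_or_nonempty Up with hUpe | hUpe
      · rcases Finset.eq_empty_or_nonempty Low with hLowe | hLowe
        · obtain ⟨t, ht⟩ := key 0 (by simp [hUpe]) (by simp [hLowe])
          exact ⟨t, mem_iInter.2 ht⟩
        · obtain ⟨t, ht⟩ := key (Low.sup' hLowe val + 1)
            (by simp [hUpe])
            (fun j hj => rel_of_lt (lt_of_le_of_lt (Finset.le_sup' val hj) (by linarith)))
          exact ⟨t, mem_iInter.2 ht⟩
      · rcases Finset.eq_empty_or_nonempty Low with hLowe | hLowe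
        · obtain ⟨t, ht⟩ := key (Up.inf' hUpe val - 1)
            (fun i hi => rel_of_lt (lt_of_lt_of_le (by linarith) (Finset.inf'_le val hi)))
            (by simp [hLowe])
          exact ⟨t, mem_iInter.2 ht⟩
        · set L := Low.sup' hLowe val with hL
          set Uv := Up.inf' hUpe val with hUv
          obtain ⟨j₀, hj₀, hj₀v⟩ := Finset.exists_mem_eq_sup' hLowe val
          obtain ⟨i₀, hi₀, hi₀v⟩ := Finset.exists_mem_eq_inf' hUpe val
          by_cases hLU : L < Uv
          · have hmid1 : ∀ i ∈ Up, (L + Uv)/2 < val i := by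
              intro i hi
              have h' := Finset.inf'_le val hi
              rw [← hUv] at h'
              linarith
            have hmid2 : ∀ j ∈ Low, val j < (L + Uv)/2 := by
              intro j hj
              have h' := Finset.le_sup' val hj
              rw [← hL] at h'
              linarith
            obtain ⟨t, ht⟩ := key ((L + Uv)/2) (fun i hi => rel_of_lt (hmid1 i hi))
              (fun j hj => rel_of_lt (hmid2 j hj))
            exact ⟨t, mem_iInter.2 ht⟩
          · push_neg at hLU  -- Uv ≤ L
            obtain ⟨t, ht⟩ := key L
              (fun i hi => by
                cases hstr : str i with
                | true =>
                  have h := hpair' i hi j₀ hj₀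
                  rw [hstr, Bool.true_or, rel_true] at h
                  rw [rel_true, hL, hj₀v]
                  exact h
                | false =>
                  rw [rel_false, hL, hj₀v]
                  exact rel.le (hpair' i hi j₀ hj₀))
              (fun j hj => by
                cases hstr : str j with
                | true =>
                  have h := hpair' i₀ hi₀ j hj
                  rw [hstr, Bool.or_true, rel_true] at h
                  rw [rel_true]
                  calc val j < val i₀ := h
                    _ = Uv := hi₀v.symm
                    _ ≤ L := hLU
                | false =>
                  rw [rel_false, hL]
                  exact Finset.le_sup' val hj)
            exact ⟨t, mem_iInter.2 ht⟩
  rw [hset]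
  exact hCP

end FM


section Proj

lemma mem_of_funeq {α : Type*} {S : Set α} {a b : α} (h : a = b) (hb : b ∈ S) : a ∈ S :=
  h ▸ hb

lemma isConvexPolyhedron_reindex {ι κ : Type} [Fintype ι] [Fintype κ] (e : ι ≃ κ)
    {S : Set (ι → ℝ)} (hS : IsConvexPolyhedron S) :
    IsConvexPolyhedron {x : κ → ℝ | (fun i => x (e i)) ∈ S} := by
  obtain ⟨k, A, B, str, rfl⟩ := isConvexPolyhedron_iff.1 hS
  refine isConvexPolyhedron_iff.2 ⟨k, fun i => (A i) ∘ e.symm, B, str, ?_⟩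
  ext x
  simp only [mem_setOf_eq, mem_iInter, mem_hsSet]
  refine forall_congr' fun i => ?_
  have : (∑ j : ι, A i j * x (e j)) = ∑ m : κ, (A i ∘ e.symm) m * x m := by
    rw [← Equiv.sum_comp e (fun m => (A i ∘ e.symm) m * x m)]
    simp
  rw [this]

lemma proj_fintype {ι : Type} [Fintype ι] (κ : Type) [Fintype κ]
    {S : Set ((ι ⊕ κ) → ℝ)} (hS : IsConvexPolyhedron S) :
    IsConvexPolyhedron {x : ι → ℝ | ∃ y : κ → ℝ, Sum.elim x y ∈ S} := by
  classical
  revert S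
  have main : ∀ (κ' : Type) [Fintype κ'], ∀ {S : Set ((ι ⊕ κ') → ℝ)}, IsConvexPolyhedron S →
      IsConvexPolyhedron {x : ι → ℝ | ∃ y : κ' → ℝ, Sum.elim x y ∈ S} := by
    intro κ'
    refine Fintype.induction_empty_option
      (P := fun γ => ∀ [Fintype γ], ∀ {S : Set ((ι ⊕ γ) → ℝ)}, IsConvexPolyhedron S →
        IsConvexPolyhedron {x : ι → ℝ | ∃ y : γ → ℝ, Sum.elim x y ∈ S}) ?_ ?_ ?_ κ'
    · -- transfer along an equivalence
      intro γ β _ e IH _ S hS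
      have : Fintype γ := Fintype.ofEquiv β e.symm
      have hS' : IsConvexPolyhedron {z : (ι ⊕ γ) → ℝ |
          (fun w : ι ⊕ β => z ((Equiv.sumCongr (Equiv.refl ι) e).symm w)) ∈ S} :=
        isConvexPolyhedron_reindex (Equiv.sumCongr (Equiv.refl ι) e).symm hS
      have := IH hS'
      convert this using 1
      ext x
      simp only [mem_setOf_eq]
      constructor
      · rintro ⟨y, hy⟩
        refine ⟨fun g => y (e g), ?_⟩
        try simp only [mem_setOf_eq] at hy ⊢
        refine mem_of_funeq ?_ hy
        funext w
        rcases w with i | b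
        · rfl
        · simp
      · rintro ⟨y, hy⟩
        refine ⟨fun b => y (e.symm b), ?_⟩
        try simp only [mem_setOf_eq] at hy ⊢
        refine mem_of_funeq ?_ hy
        funext w
        rcases w with i | b
        · rfl
        · simp
    · -- empty case
      intro _ S hS
      have h := isConvexPolyhedron_reindex (Equiv.sumEmpty ι PEmpty) hS
      convert h using 1
      ext x
      simp only [mem_setOf_eq]
      constructor
      · rintro ⟨y, hy⟩
        try simp only [mem_setOf_eq] at hy ⊢
        refine mem_of_funeq ?_ hy
        funext w
        rcases w with i | p
        · rfl
        · exact p.elim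
      · intro h'
        try simp only [mem_setOf_eq] at h' ⊢
        refine ⟨fun p => p.elim, mem_of_funeq ?_ h'⟩
        funext w
        rcases w with i | p
        · rfl
        · exact p.elim
    · -- option case
      intro γ _ IH _ S hS
      set E : (ι ⊕ Option γ) ≃ ((ι ⊕ γ) ⊕ PUnit) :=
        ((Equiv.refl ι).sumCongr (Equiv.optionEquivSumPUnit γ)).trans
          (Equiv.sumAssoc ι γ PUnit).symm with hE
      have hS' : IsConvexPolyhedron {z : ((ι ⊕ γ) ⊕ PUnit) → ℝ |
          (fun w : ι ⊕ Option γ => z (E w)) ∈ S} :=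
        isConvexPolyhedron_reindex E hS
      have h1 := proj_one (ι := ι ⊕ γ) hS'
      have h2 := IH h1
      convert h2 using 1
      ext x
      simp only [mem_setOf_eq]
      constructor
      · rintro ⟨y, hy⟩
        refine ⟨fun g => y (some g), y none, ?_⟩
        try simp only [mem_setOf_eq] at hy ⊢
        refine mem_of_funeq ?_ hy
        funext w
        rcases w with i | og
        · rfl
        · rcases og with _ | g <;> simp [hE, Equiv.sumAssoc, Equiv.optionEquivSumPUnit]
      · rintro ⟨y', t, hy⟩
        try simp only [mem_setOf_eq] at hy ⊢
        refine ⟨fun og => Option.elim og t y', mem_of_funeq ?_ hy⟩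
        funext w
        rcases w with i | og
        · rfl
        · rcases og with _ | g <;> simp [hE, Equiv.sumAssoc, Equiv.optionEquivSumPUnit]
  intro S hS
  exact main κ hS

end Proj


section Preflow
variable {n : ℕ}

lemma rel_sub_iff {s : Bool} {a b : ℝ} : rel s a b ↔ rel s (a - b) 0 := by
  cases s with
  | false => rw [rel_false, rel_false]; constructor <;> intro <;> linarith
  | true => rw [rel_true, rel_true]; constructor <;> intro <;> linarith

/-- Strictly positive-time pre-flow. -/
def prePos (F G : Set (Vec n)) : Set (Vec n) :=
  {u | ∃ δ : ℝ, 0 < δ ∧ ∃ c ∈ F, u + δ • c ∈ G}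

lemma preflow_eq_union (F G : Set (Vec n)) (hFne : F.Nonempty) :
    preflow F G = G ∪ prePos F G := by
  ext u
  constructor
  · rintro ⟨δ, hδ, c, hc, hm⟩
    rcases eq_or_lt_of_le hδ with h | h
    · left; rw [← h, zero_smul, add_zero] at hm; exact hm
    · right; exact ⟨δ, h, c, hc, hm⟩
  · rintro (h | ⟨δ, hδ, c, hc, hm⟩)
    · obtain ⟨c, hc⟩ := hFne
      exact ⟨0, le_refl 0, c, hc, by rw [zero_smul, add_zero]; exact h⟩
    · exact ⟨δ, hδ.le, c, hc, hm⟩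

lemma prePos_convexPolyhedron {F G : Set (Vec n)} (hF : IsConvexPolyhedron F)
    (hG : IsConvexPolyhedron G) : IsConvexPolyhedron (prePos F G) := by
  classical
  obtain ⟨kF, aF, bF, sF, hFeq⟩ := isConvexPolyhedron_iff.1 hF
  obtain ⟨kG, aG, bG, sG, hGeq⟩ := isConvexPolyhedron_iff.1 hG
  -- the extended space: u-variables ⊕ (δ ⊕ w-variables)
  set κ : Type := PUnit ⊕ Fin n with hκ
  set Ω : Type := Fin n ⊕ κ with hΩ
  -- coefficient functions
  set Af : Fin kF → Ω → ℝ := fun l ω => Sum.elim (fun _ => 0)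
    (Sum.elim (fun _ => -bF l) (fun i => aF l i)) ω with hAf
  set Ag : Fin kG → Ω → ℝ := fun m ω => Sum.elim (fun i => aG m i)
    (Sum.elim (fun _ => 0) (fun i => aG m i)) ω with hAg
  set Ad : Ω → ℝ := Sum.elim (fun _ => 0) (Sum.elim (fun _ => -1) (fun _ => 0)) with hAd
  set E : Set (Ω → ℝ) :=
    (⋂ l, hsSet (Af l) 0 (sF l)) ∩ (⋂ m, hsSet (Ag m) (bG m) (sG m)) ∩ hsSet Ad 0 true
    with hE
  have hECP : IsConvexPolyhedron E :=
    ((isConvexPolyhedron_iInter fun l => isConvexPolyhedron_hsSet _ _ _).inter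
      (isConvexPolyhedron_iInter fun m => isConvexPolyhedron_hsSet _ _ _)).inter
      (isConvexPolyhedron_hsSet _ _ _)
  have hproj := proj_fintype κ hECP
  -- sums over Ω split
  have hsum : ∀ (A : Ω → ℝ) (z : Ω → ℝ),
      (∑ ω : Ω, A ω * z ω) = (∑ i : Fin n, A (Sum.inl i) * z (Sum.inl i)) +
        (A (Sum.inr (Sum.inl PUnit.unit)) * z (Sum.inr (Sum.inl PUnit.unit)) +
         ∑ i : Fin n, A (Sum.inr (Sum.inr i)) * z (Sum.inr (Sum.inr i))) := by
    intro A z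
    rw [Fintype.sum_sum_type, Fintype.sum_sum_type, Fintype.sum_unique
      (fun p : PUnit => A (Sum.inr (Sum.inl p)) * z (Sum.inr (Sum.inl p)))]
  have key : prePos F G = {x : Vec n | ∃ y : κ → ℝ, Sum.elim x y ∈ E} := by
    ext u
    simp only [mem_setOf_eq, prePos]
    constructor
    · rintro ⟨δ, hδ, c, hc, hm⟩
      refine ⟨Sum.elim (fun _ => δ) (fun i => δ * c i), ?_⟩
      rw [hE]
      refine ⟨⟨mem_iInter.2 fun l => ?_, mem_iInter.2 fun m => ?_⟩, ?_⟩
      · rw [mem_hsSet, hsum]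
        simp only [hAf, Sum.elim_inl, Sum.elim_inr, zero_mul, Finset.sum_const_zero, zero_add]
        have hcl : rel (sF l) (∑ i, aF l i * c i) (bF l) := by
          have := hc; rw [hFeq, mem_iInter] at this; exact mem_hsSet.1 (this l)
        have := rel_smul_pos hδ hcl
        rw [rel_sub_iff] at this
        have hsum2 : ∑ i, aF l i * (δ * c i) = δ * ∑ i, aF l i * c i := by
          rw [Finset.mul_sum]
          exact Finset.sum_congr rfl fun i _ => by ring
        have heq : -bF l * δ + ∑ i, aF l i * (δ * c i) = δ * (∑ i, aF l i * c i) - δ * bF l := by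
          rw [hsum2]; ring
        rw [heq]
        exact this
      · rw [mem_hsSet, hsum]
        simp only [hAg, Sum.elim_inl, Sum.elim_inr, zero_mul, zero_add]
        have hgm : rel (sG m) (∑ i, aG m i * (u + δ • c) i) (bG m) := by
          have := hm; rw [hGeq, mem_iInter] at this; exact mem_hsSet.1 (this m)
        have heq : (∑ i, aG m i * u i) + ∑ i, aG m i * (δ * c i)
            = ∑ i, aG m i * (u + δ • c) i := by
          rw [← Finset.sum_add_distrib]
          refine Finset.sum_congr rfl fun i _ => ?_
          simp only [Pi.add_apply, Pi.smul_apply, smul_eq_mul]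
          ring
        rw [heq]
        exact hgm
      · rw [mem_hsSet, hsum]
        simp only [hAd, Sum.elim_inl, Sum.elim_inr, zero_mul, Finset.sum_const_zero, zero_add,
          add_zero, rel_true]
        linarith
    · rintro ⟨y, hy⟩
      rw [hE] at hy
      obtain ⟨⟨h1, h2⟩, h3⟩ := hy
      set δ : ℝ := y (Sum.inl PUnit.unit) with hδdef
      set w : Vec n := fun i => y (Sum.inr i) with hwdef
      have hδpos : 0 < δ := by
        have := mem_hsSet.1 h3
        rw [hsum] at this
        simp only [hAd, Sum.elim_inl, Sum.elim_inr, zero_mul, Finset.sum_const_zero, zero_add,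
          add_zero, rel_true] at this
        rw [hδdef]
        linarith
      refine ⟨δ, hδpos, δ⁻¹ • w, ?_, ?_⟩
      · rw [hFeq, mem_iInter]
        intro l
        have := mem_hsSet.1 (mem_iInter.1 h1 l)
        rw [hsum] at this
        simp only [hAf, Sum.elim_inl, Sum.elim_inr, zero_mul, Finset.sum_const_zero,
          zero_add] at this
        rw [mem_hsSet]
        have heq : (∑ i, aF l i * (δ⁻¹ • w) i) = δ⁻¹ * ∑ i, aF l i * w i := by
          rw [Finset.mul_sum]
          refine Finset.sum_congr rfl fun i _ => ?_
          simp only [Pi.smul_apply, smul_eq_mul]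
          ring
        rw [heq]
        have hb : bF l = δ⁻¹ * (δ * bF l) := by
          field_simp
        rw [hb]
        refine rel_smul_pos (by positivity) ?_
        rw [rel_sub_iff]
        have heq2 : (∑ i, aF l i * w i) - δ * bF l = -bF l * δ + ∑ i, aF l i * w i := by ring
        rw [heq2]
        convert this using 2
      · rw [hGeq, mem_iInter]
        intro m
        have := mem_hsSet.1 (mem_iInter.1 h2 m)
        rw [hsum] at this
        simp only [hAg, Sum.elim_inl, Sum.elim_inr, zero_mul, zero_add] at this
        rw [mem_hsSet]
        have heq : (∑ i, aG m i * (u + δ • δ⁻¹ • w) i)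
            = (∑ i, aG m i * u i) + ∑ i, aG m i * w i := by
          rw [← Finset.sum_add_distrib]
          refine Finset.sum_congr rfl fun i _ => ?_
          simp only [Pi.add_apply, Pi.smul_apply, smul_eq_mul]
          rw [mul_inv_cancel_left₀ (ne_of_gt hδpos)]
          ring
        rw [heq]
        convert this using 2
  rw [key]
  exact hproj

lemma preflow_isPolyhedron {F G : Set (Vec n)} (hF : IsConvexPolyhedron F) (hFne : F.Nonempty)
    (hG : IsPolyhedron G) : IsPolyhedron (preflow F G) := by
  obtain ⟨k, Ps, hPs, rfl⟩ := hG
  have hdist : preflow F (⋃ i, Ps i) = ⋃ i, preflow F (Ps i) := by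
    ext u
    simp only [preflow, mem_iUnion, mem_setOf_eq]
    constructor
    · rintro ⟨δ, hδ, c, hc, hm⟩
      obtain ⟨i, hi⟩ := hm
      exact ⟨i, δ, hδ, c, hc, hi⟩
    · rintro ⟨i, δ, hδ, c, hc, hm⟩
      exact ⟨δ, hδ, c, hc, ⟨i, hm⟩⟩
  rw [hdist]
  refine isPolyhedron_union_fintype fun i => ?_
  rw [preflow_eq_union F (Ps i) hFne]
  exact (hPs i).isPolyhedron.union (prePos_convexPolyhedron hF (hPs i)).isPolyhedron

lemma bnd_isPolyhedron {P Q : Set (Vec n)} (hP : IsConvexPolyhedron P)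
    (hQ : IsConvexPolyhedron Q) : IsPolyhedron (bnd P Q) :=
  (hP.closure_cp.isPolyhedron.inter hQ.isPolyhedron).union
    (hP.isPolyhedron.inter hQ.closure_cp.isPolyhedron)

/-- The polyhedrality of one τ-step piece. -/
lemma tauPiece_isPolyhedron {F P Q : Set (Vec n)} (hF : IsConvexPolyhedron F)
    (hFne : F.Nonempty) (hP : IsConvexPolyhedron P) (hQ : IsConvexPolyhedron Q) :
    IsPolyhedron (P ∩ preflow F (bnd P Q ∩ preflow F Q)) :=
  hP.isPolyhedron.inter (preflow_isPolyhedron hF hFne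
    ((bnd_isPolyhedron hP hQ).inter (preflow_isPolyhedron hF hFne hQ.isPolyhedron)))

end Preflow


section Lists
variable {n : ℕ}

/-- Validity of a list of (duration, slope) segments starting at `u`. -/
def Ok (F U V : Set (Vec n)) : Vec n → List (ℝ × Vec n) → Prop
  | u, [] => u ∈ U
  | u, (dc :: L) => 0 ≤ dc.1 ∧ dc.2 ∈ F ∧ (∀ t, 0 ≤ t → t ≤ dc.1 → u + t • dc.2 ∈ Vᶜ ∪ U) ∧
      Ok F U V (u + dc.1 • dc.2) L

variable {F U V : Set (Vec n)}

lemma prwa_of_ok {u : Vec n} {L : List (ℝ × Vec n)} (h : Ok F U V u L) : u ∈ prwa F U V := by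
  induction L generalizing u with
  | nil =>
    exact ⟨0, Fin.elim0, Fin.elim0, fun _ => u, fun i => i.elim0, fun i => i.elim0, rfl,
      fun i => i.elim0, h, fun i => i.elim0⟩
  | cons dc L ih =>
    obtain ⟨hδ, hc₀, hsafe, hOk'⟩ := h
    obtain ⟨k, d, c, p, hd, hc, hp0, hrec, hlast, hsf⟩ := ih hOk'
    refine ⟨k + 1, Fin.cons dc.1 d, Fin.cons dc.2 c, Fin.cons u p, ?_, ?_, ?_, ?_, ?_, ?_⟩
    · intro i
      induction i using Fin.cases with
      | zero => exact hδ
      | succ j => exact hd j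
    · intro i
      induction i using Fin.cases with
      | zero => exact hc₀
      | succ j => exact hc j
    · rfl
    · intro i
      induction i using Fin.cases with
      | zero =>
        simp only [Fin.cons_succ, Fin.castSucc_zero, Fin.cons_zero]
        rw [hp0]
      | succ j =>
        rw [Fin.cons_succ, ← Fin.succ_castSucc, Fin.cons_succ, Fin.cons_succ, Fin.cons_succ]
        exact hrec j
    · rw [← Fin.succ_last, Fin.cons_succ]
      exact hlast
    · intro i t ht0 ht1
      induction i using Fin.cases with
      | zero =>
        right
        simp only [Fin.castSucc_zero, Fin.cons_zero]
        exact hsafe t ht0 ht1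
      | succ j =>
        rw [← Fin.succ_castSucc, Fin.cons_succ, Fin.cons_succ, ← Fin.succ_last, Fin.cons_succ]
        exact hsf j t ht0 ht1

lemma ok_of_prwa {u : Vec n} (h : u ∈ prwa F U V) : ∃ L, Ok F U V u L := by
  obtain ⟨k, d, c, p, hd, hc, hp0, hrec, hlast, hsf⟩ := h
  induction k generalizing u with
  | zero =>
    refine ⟨[], ?_⟩
    show u ∈ U
    rw [← hp0]
    convert hlast using 2
    rfl
  | succ k ih =>
    obtain ⟨L', hL'⟩ := ih (u := p (Fin.succ 0)) (fun i => d i.succ) (fun i => c i.succ)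
      (fun i => p i.succ) (fun i => hd i.succ) (fun i => hc i.succ) rfl
      (fun i => by simp only [Fin.succ_castSucc]; exact hrec i.succ)
      (by simp only [Fin.succ_last]; exact hlast)
      (fun i t ht0 ht1 => by
        simp only [Fin.succ_castSucc, Fin.succ_last]
        exact hsf i.succ t ht0 ht1)
    refine ⟨(d 0, c 0) :: L', hd 0, hc 0, ?_, ?_⟩
    · intro t ht0 ht1
      have := hsf 0 t ht0 ht1
      rw [Fin.castSucc_zero, hp0] at this
      rcases this with h | h
      · rw [h]
        exact mem_union_right _ hlast
      · exact h
    · have : p (Fin.succ 0) = u + d 0 • c 0 := by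
        have := hrec 0
        rw [Fin.castSucc_zero, hp0] at this
        exact this
      rwa [this] at hL'

lemma prwa_iff_ok {u : Vec n} : u ∈ prwa F U V ↔ ∃ L, Ok F U V u L :=
  ⟨ok_of_prwa, fun ⟨_, h⟩ => prwa_of_ok h⟩

lemma U_subset_prwa : U ⊆ prwa F U V := fun u hu => prwa_of_ok (L := []) hu

lemma prwa_subset_safe : prwa F U V ⊆ Vᶜ ∪ U := by
  intro u hu
  obtain ⟨L, hL⟩ := ok_of_prwa hu
  cases L with
  | nil => exact mem_union_right _ hL
  | cons dc L =>
    obtain ⟨hδ, _, hsafe, _⟩ := hL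
    have := hsafe 0 le_rfl hδ
    rwa [zero_smul, add_zero] at this

/-- One-segment prefixing. -/
lemma prwa_step {u c : Vec n} {δ : ℝ} (hδ : 0 ≤ δ) (hc : c ∈ F)
    (hsafe : ∀ t, 0 ≤ t → t < δ → u + t • c ∈ Vᶜ ∪ U)
    (hend : u + δ • c ∈ prwa F U V) : u ∈ prwa F U V := by
  obtain ⟨L, hL⟩ := ok_of_prwa hend
  refine prwa_of_ok (L := (δ, c) :: L) ⟨hδ, hc, ?_, hL⟩
  intro t ht0 ht1
  rcases eq_or_lt_of_le ht1 with h | h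
  · rw [h]
    exact prwa_subset_safe hend
  · exact hsafe t ht0 h

/-- The τ-closure property (iii) holds for `prwa`. -/
lemma prwa_tau (hFne : F.Nonempty) {P Q : Set (Vec n)} (hP : IsConvexPolyhedron P)
    (hPV : P ⊆ Vᶜ) (hQ : IsConvexPolyhedron Q) (hQW : Q ⊆ prwa F U V) :
    P ∩ preflow F (bnd P Q ∩ preflow F Q) ⊆ prwa F U V := by
  rintro u ⟨huP, δ, hδ, c, hc, hz⟩
  obtain ⟨hzb, δ', hδ', c', hc', hw⟩ := hz
  -- the boundary point z = u + δ • c is in prwa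
  have hzP : u + δ • c ∈ closure P := by
    rcases hzb with h | h
    · exact h.1
    · exact subset_closure h.1
  have hzprwa : u + δ • c ∈ prwa F U V := by
    refine prwa_step hδ' hc' ?_ (hQW hw)
    intro t ht0 ht1
    rcases hzb with h | h
    · -- z ∈ closure P ∩ Q
      have : u + δ • c + t • c' ∈ Q :=
        hQ.seg_mem h.2 (subset_closure hw) ht0 ht1
      exact (union_subset_union (fun x hx => hx) (fun x hx => hx))
        ((prwa_subset_safe) (hQW this))
    · -- z ∈ P ∩ closure Q
      rcases eq_or_lt_of_le ht0 with h0 | h0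
      · rw [← h0, zero_smul, add_zero]
        exact mem_union_left _ (hPV h.1)
      · have : u + δ • c + t • c' ∈ Q := hQ.seg_mem' h.2 hw h0 ht1.le
        exact prwa_subset_safe (hQW this)
  refine prwa_step hδ hc ?_ hzprwa
  intro t ht0 ht1
  exact mem_union_left _ (hPV (hP.seg_mem huP hzP ht0 ht1))

end Lists


section Curve
variable {n : ℕ} {F U V : Set (Vec n)}

/-- Piecewise-linear curve determined by a list of segments. -/
noncomputable def curve (u : Vec n) : List (ℝ × Vec n) → ℝ → Vec n
  | [] => fun _ => u
  | (dc :: L) => fun t => if t ≤ dc.1 then u + t • dc.2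
      else curve (u + dc.1 • dc.2) L (t - dc.1)

/-- Total duration. -/
def dur : List (ℝ × Vec n) → ℝ
  | [] => 0
  | (dc :: L) => dc.1 + dur L

/-- Durations are all nonnegative. -/
def Nn : List (ℝ × Vec n) → Prop
  | [] => True
  | (dc :: L) => 0 ≤ dc.1 ∧ Nn L

lemma Ok.nn {u : Vec n} {L : List (ℝ × Vec n)} (h : Ok F U V u L) : Nn L := by
  induction L generalizing u with
  | nil => trivial
  | cons dc L ih => exact ⟨h.1, ih h.2.2.2⟩

lemma dur_nonneg {L : List (ℝ × Vec n)} (h : Nn L) : 0 ≤ dur L := by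
  induction L with
  | nil => exact le_refl 0
  | cons dc L ih => exact add_nonneg h.1 (ih h.2)

lemma curve_zero {u : Vec n} {L : List (ℝ × Vec n)} (h : Nn L) : curve u L 0 = u := by
  cases L with
  | nil => rfl
  | cons dc L => simp [curve, if_pos h.1]

lemma curve_cons_ge {u : Vec n} {dc : ℝ × Vec n} {L : List (ℝ × Vec n)} (h : Nn L) {t : ℝ}
    (ht : dc.1 ≤ t) : curve u (dc :: L) t = curve (u + dc.1 • dc.2) L (t - dc.1) := by
  rcases eq_or_lt_of_le ht with h' | h'
  · simp only [curve]; rw [if_pos (le_of_eq h'.symm), ← h', sub_self, curve_zero h]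
  · simp only [curve]; rw [if_neg (not_le.2 h')]

lemma curve_dur {u : Vec n} {L : List (ℝ × Vec n)} (h : Ok F U V u L) :
    curve u L (dur L) ∈ U := by
  induction L generalizing u with
  | nil => exact h
  | cons dc L ih =>
    rw [show dur (dc :: L) = dc.1 + dur L from rfl,
      curve_cons_ge (h.nn).2 (by have := dur_nonneg (h.nn).2; linarith), add_sub_cancel_left]
    exact ih h.2.2.2

lemma curve_safe {u : Vec n} {L : List (ℝ × Vec n)} (h : Ok F U V u L) {t : ℝ}
    (h0 : 0 ≤ t) (h1 : t ≤ dur L) : curve u L t ∈ Vᶜ ∪ U := by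
  induction L generalizing u t with
  | nil =>
    have : t = 0 := le_antisymm h1 h0
    rw [this]
    exact mem_union_right _ h
  | cons dc L ih =>
    by_cases hle : t ≤ dc.1
    · simp only [curve]; rw [if_pos hle]
      exact h.2.2.1 t h0 hle
    · push_neg at hle
      rw [curve_cons_ge h.nn.2 hle.le]
      exact ih h.2.2.2 (by linarith) (by rw [show dur (dc :: L) = dc.1 + dur L from rfl] at h1; linarith)

lemma exists_comb (hF : Convex ℝ F) {c₀ c' : Vec n} (hc₀ : c₀ ∈ F) (hc' : c' ∈ F)
    {a b : ℝ} (ha : 0 ≤ a) (hb : 0 ≤ b) :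
    ∃ c'' ∈ F, a • c₀ + b • c' = (a + b) • c'' := by
  rcases eq_or_lt_of_le (add_nonneg ha hb) with h | h
  · have ha0 : a = 0 := by linarith [le_of_eq h.symm]
    have hb0 : b = 0 := by linarith [le_of_eq h.symm]
    exact ⟨c₀, hc₀, by rw [ha0, hb0]; simp⟩
  · refine ⟨(a/(a+b)) • c₀ + (b/(a+b)) • c', ?_, ?_⟩
    · exact hF hc₀ hc' (by positivity) (by positivity) (by field_simp)
    · rw [smul_add, smul_smul, smul_smul, mul_div_cancel₀ _ h.ne', mul_div_cancel₀ _ h.ne']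

lemma curve_displacement (hF : Convex ℝ F) (hFne : F.Nonempty) {u : Vec n}
    {L : List (ℝ × Vec n)} (h : Ok F U V u L) :
    ∀ t₀ t₁ : ℝ, 0 ≤ t₀ → t₀ ≤ t₁ → t₁ ≤ dur L →
    ∃ c ∈ F, curve u L t₁ = curve u L t₀ + (t₁ - t₀) • c := by
  induction L generalizing u with
  | nil =>
    intro t₀ t₁ h0 h01 h1
    obtain ⟨c, hc⟩ := hFne
    have ht0 : t₀ = 0 := le_antisymm (le_trans h01 h1) h0
    have ht1 : t₁ = 0 := le_antisymm h1 (le_trans h0 h01)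
    exact ⟨c, hc, by rw [ht0, ht1]; simp⟩
  | cons dc L ih =>
    intro t₀ t₁ h0 h01 h1
    have hdur : dur (dc :: L) = dc.1 + dur L := rfl
    by_cases hb1 : t₁ ≤ dc.1
    · refine ⟨dc.2, h.2.1, ?_⟩
      simp only [curve]; rw [if_pos hb1, if_pos (le_trans h01 hb1)]
      rw [add_assoc, ← add_smul]
      ring_nf
    · push_neg at hb1
      by_cases hb0 : dc.1 ≤ t₀
      · rw [curve_cons_ge h.nn.2 hb0, curve_cons_ge h.nn.2 (by linarith)]
        obtain ⟨c, hc, hcc⟩ := ih h.2.2.2 (t₀ - dc.1) (t₁ - dc.1) (by linarith) (by linarith)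
          (by rw [hdur] at h1; linarith)
        refine ⟨c, hc, ?_⟩
        rw [hcc]
        congr 1
        congr 1
        ring
      · push_neg at hb0
        -- t₀ < dc.1 < t₁
        obtain ⟨c, hc, hcc⟩ := ih h.2.2.2 0 (t₁ - dc.1) le_rfl (by linarith)
          (by rw [hdur] at h1; linarith)
        rw [curve_zero h.nn.2] at hcc
        obtain ⟨c'', hc'', hcomb⟩ := exists_comb hF h.2.1 hc
          (a := dc.1 - t₀) (b := t₁ - dc.1) (by linarith) (by linarith)
        refine ⟨c'', hc'', ?_⟩
        rw [curve_cons_ge h.nn.2 hb1.le, hcc]; simp only [curve]; rw [if_pos hb0.le]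
        have : (t₁ - t₀) = (dc.1 - t₀) + (t₁ - dc.1) := by ring
        rw [this, ← hcomb]
        have : dc.1 • dc.2 = t₀ • dc.2 + (dc.1 - t₀) • dc.2 := by
          rw [← add_smul]; ring_nf
        rw [this]
        abel

lemma curve_fwd {u : Vec n} {L : List (ℝ × Vec n)} (h : Ok F U V u L) :
    ∀ t₀ : ℝ, 0 ≤ t₀ → t₀ < dur L →
    ∃ ε > 0, ∃ c ∈ F, ∀ r, 0 ≤ r → r ≤ ε → curve u L (t₀ + r) = curve u L t₀ + r • c := by
  induction L generalizing u with
  | nil =>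
    intro t₀ h0 h1
    exact absurd (lt_of_le_of_lt h0 h1) (by simp [dur])
  | cons dc L ih =>
    intro t₀ h0 h1
    have hdur : dur (dc :: L) = dc.1 + dur L := rfl
    by_cases hb : t₀ < dc.1
    · refine ⟨dc.1 - t₀, by linarith, dc.2, h.2.1, fun r hr0 hr1 => ?_⟩
      simp only [curve]; rw [if_pos (by linarith : t₀ + r ≤ dc.1), if_pos hb.le, add_assoc, ← add_smul]
    · push_neg at hb
      obtain ⟨ε, hε, c, hc, hfwd⟩ := ih h.2.2.2 (t₀ - dc.1) (by linarith)
        (by rw [hdur] at h1; linarith)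
      refine ⟨ε, hε, c, hc, fun r hr0 hr1 => ?_⟩
      rw [curve_cons_ge h.nn.2 (by linarith : dc.1 ≤ t₀ + r), curve_cons_ge h.nn.2 hb]
      have : t₀ + r - dc.1 = (t₀ - dc.1) + r := by ring
      rw [this]
      exact hfwd r hr0 hr1

lemma curve_bwd {u : Vec n} {L : List (ℝ × Vec n)} (h : Ok F U V u L) :
    ∀ t₀ : ℝ, 0 < t₀ → t₀ ≤ dur L →
    ∃ ε > 0, ε ≤ t₀ ∧ ∃ c ∈ F, ∀ r, 0 ≤ r → r ≤ ε →
      curve u L (t₀ - r) = curve u L t₀ - r • c := by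
  induction L generalizing u with
  | nil =>
    intro t₀ h0 h1
    exact absurd (lt_of_lt_of_le h0 h1) (by simp [dur])
  | cons dc L ih =>
    intro t₀ h0 h1
    have hdur : dur (dc :: L) = dc.1 + dur L := rfl
    by_cases hb : t₀ ≤ dc.1
    · refine ⟨t₀, h0, le_refl _, dc.2, h.2.1, fun r hr0 hr1 => ?_⟩
      simp only [curve]; rw [if_pos (by linarith : t₀ - r ≤ dc.1), if_pos hb]
      rw [sub_smul]
      abel
    · push_neg at hb
      obtain ⟨ε, hε, hε', c, hc, hbwd⟩ := ih h.2.2.2 (t₀ - dc.1) (by linarith)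
        (by rw [hdur] at h1; linarith)
      refine ⟨ε, hε, by have := h.1; linarith, c, hc, fun r hr0 hr1 => ?_⟩
      rw [curve_cons_ge h.nn.2 (by linarith : dc.1 ≤ t₀ - r), curve_cons_ge h.nn.2 hb.le]
      have : t₀ - r - dc.1 = (t₀ - dc.1) - r := by ring
      rw [this]
      exact hbwd r hr0 hr1

lemma curve_suffix {u : Vec n} {L : List (ℝ × Vec n)} (h : Ok F U V u L) :
    ∀ s : ℝ, 0 ≤ s → s ≤ dur L →
    ∃ L', Ok F U V (curve u L s) L' ∧ dur L' = dur L - s ∧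
      ∀ r, 0 ≤ r → r ≤ dur L - s → curve (curve u L s) L' r = curve u L (s + r) := by
  induction L generalizing u with
  | nil =>
    intro s h0 h1
    have hs : s = 0 := le_antisymm h1 h0
    exact ⟨[], h, by simp [dur, hs], fun r _ _ => rfl⟩
  | cons dc L ih =>
    intro s h0 h1
    have hdur : dur (dc :: L) = dc.1 + dur L := rfl
    by_cases hb : s ≤ dc.1
    · have hx0 : curve u (dc :: L) s = u + s • dc.2 := by
        simp only [curve]; rw [if_pos hb]
      refine ⟨(dc.1 - s, dc.2) :: L, ?_, ?_, ?_⟩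
      · refine ⟨by simp only; linarith, h.2.1, ?_, ?_⟩
        · intro t ht0 ht1
          rw [hx0]
          have : u + s • dc.2 + t • dc.2 = u + (s + t) • dc.2 := by
            rw [add_assoc, ← add_smul]
          rw [this]
          exact h.2.2.1 (s + t) (by linarith) (by simp at ht1; linarith)
        · rw [hx0]
          have : u + s • dc.2 + (dc.1 - s, dc.2).1 • (dc.1 - s, dc.2).2 = u + dc.1 • dc.2 := by
            simp only
            rw [add_assoc, ← add_smul]
            ring_nf
          rw [this]
          exact h.2.2.2
      · show (dc.1 - s) + dur L = dur (dc :: L) - s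
        rw [hdur]; ring
      · intro r hr0 hr1
        have hx : curve u (dc :: L) s = u + s • dc.2 := by
          simp only [curve]; rw [if_pos hb]
        rw [hx]
        by_cases hrb : r ≤ dc.1 - s
        · have h1' : curve (u + s • dc.2) ((dc.1 - s, dc.2) :: L) r
              = u + s • dc.2 + r • dc.2 := by
            simp only [curve]; rw [if_pos (show r ≤ (dc.1 - s, dc.2).1 from hrb)]
          have h2' : curve u (dc :: L) (s + r) = u + (s + r) • dc.2 := by
            simp only [curve]; rw [if_pos (by linarith : s + r ≤ dc.1)]
          rw [h1', h2', add_assoc, ← add_smul]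
        · push_neg at hrb
          rw [curve_cons_ge h.nn.2 (show (dc.1 - s, dc.2).1 ≤ r by simp only; linarith),
            curve_cons_ge h.nn.2 (by linarith : dc.1 ≤ s + r)]
          have e1 : u + s • dc.2 + (dc.1 - s, dc.2).1 • (dc.1 - s, dc.2).2
              = u + dc.1 • dc.2 := by
            simp only
            rw [add_assoc, ← add_smul]
            ring_nf
          rw [e1]
          congr 1
          simp only
          ring
    · push_neg at hb
      obtain ⟨L', hOk', hdur', hcurve'⟩ := ih h.2.2.2 (s - dc.1) (by linarith)
        (by rw [hdur] at h1; linarith)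
      rw [← curve_cons_ge h.nn.2 hb.le] at hOk' hcurve'
      refine ⟨L', hOk', by rw [hdur', hdur]; ring, fun r hr0 hr1 => ?_⟩
      rw [curve_cons_ge h.nn.2 (by linarith : dc.1 ≤ s + r)]
      have : s + r - dc.1 = (s - dc.1) + r := by ring
      rw [this]
      exact hcurve' r hr0 (by rw [hdur] at hr1; linarith)

end Curve


section Helpers
variable {n : ℕ}

lemma mem_closure_line {z v : Vec n} {D : Set (Vec n)}
    (h : ∀ η : ℝ, 0 < η → ∃ r : ℝ, 0 ≤ r ∧ r ≤ η ∧ z + r • v ∈ D) : z ∈ closure D := by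
  rw [Metric.mem_closure_iff]
  intro ε hε
  obtain ⟨r, hr0, hr1, hrD⟩ := h (ε / (‖v‖ + 1)) (by positivity)
  refine ⟨z + r • v, hrD, ?_⟩
  rw [dist_eq_norm]
  have he : z - (z + r • v) = -(r • v) := by abel
  rw [he, norm_neg, norm_smul, Real.norm_eq_abs, abs_of_nonneg hr0]
  have hv : (0:ℝ) ≤ ‖v‖ := norm_nonneg v
  calc r * ‖v‖ ≤ (ε / (‖v‖ + 1)) * ‖v‖ := by nlinarith
    _ < ε := by
        rw [div_mul_eq_mul_div, div_lt_iff₀ (by positivity)]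
        nlinarith

lemma interval_pigeonhole {k : ℕ} (Q : Fin k → Set (Vec n)) (hQ : ∀ j, Convex ℝ (Q j))
    (x v : Vec n) {ε : ℝ} (hε : 0 < ε)
    (hcov : ∀ r : ℝ, 0 < r → r ≤ ε → ∃ j, x + r • v ∈ Q j) :
    ∃ j, ∃ ε' : ℝ, 0 < ε' ∧ ε' ≤ ε ∧ ∀ r, 0 < r → r ≤ ε' → x + r • v ∈ Q j := by
  classical
  have hrr : ∀ m : ℕ, 0 < ε / (m + 1) ∧ ε / (m + 1) ≤ ε := by
    intro m
    constructor
    · positivity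
    · rw [div_le_iff₀ (by positivity)]
      nlinarith [Nat.cast_nonneg (α := ℝ) m]
  set f : ℕ → Fin k := fun m => (hcov (ε/(m+1)) (hrr m).1 (hrr m).2).choose with hf
  have hfm : ∀ m, x + (ε/(m+1)) • v ∈ Q (f m) :=
    fun m => (hcov (ε/(m+1)) (hrr m).1 (hrr m).2).choose_spec
  obtain ⟨j, hj⟩ := Finite.exists_infinite_fiber f
  have hjinf : (f ⁻¹' {j} : Set ℕ).Infinite := Set.infinite_coe_iff.1 hj
  obtain ⟨m₀, hm₀⟩ := hjinf.nonempty
  have hm₀j : f m₀ = j := hm₀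
  refine ⟨j, ε/(m₀+1), (hrr m₀).1, (hrr m₀).2, ?_⟩
  intro r hr0 hr1
  obtain ⟨M, hM⟩ := exists_nat_gt (ε / r)
  obtain ⟨m, hmfib, hmM⟩ := hjinf.exists_gt M
  have hmj : f m = j := hmfib
  have h2 : (M:ℝ) < (m:ℝ) + 1 := by
    have : (M:ℝ) < m := by exact_mod_cast hmM
    linarith
  have hsm : ε/(m+1) ≤ r := by
    rw [div_le_iff₀ (by positivity)]
    have h3 : ε < M * r := by
      rw [div_lt_iff₀ hr0] at hM
      linarith
    nlinarith [hr0.le]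
  have hconv : Convex ℝ {t : ℝ | x + t • v ∈ Q j} := by
    have hpre := (hQ j).affine_preimage (AffineMap.lineMap (x : Vec n) (x + v))
    refine (congrArg (Convex ℝ) ?_).mpr hpre
    ext t
    simp only [mem_setOf_eq, mem_preimage, AffineMap.lineMap_apply, vsub_eq_sub, vadd_eq_add,
      add_sub_cancel_left]
    rw [add_comm]
  have hoc := hconv.ordConnected
  have h1 : (ε/(m+1)) ∈ {t : ℝ | x + t • v ∈ Q j} := by
    have := hfm m
    rwa [hmj] at this
  have h2' : (ε/(m₀+1)) ∈ {t : ℝ | x + t • v ∈ Q j} := by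
    have := hfm m₀
    rwa [hm₀j] at this
  exact hoc.out h1 h2' ⟨hsm, hr1⟩

end Helpers


section Construction
variable {n : ℕ}

noncomputable def pk {S : Set (Vec n)} (h : IsPolyhedron S) : ℕ := h.choose

noncomputable def pf {S : Set (Vec n)} (h : IsPolyhedron S) : Fin (pk h) → Set (Vec n) :=
  h.choose_spec.choose

lemma pf_cp {S : Set (Vec n)} (h : IsPolyhedron S) (j : Fin (pk h)) :
    IsConvexPolyhedron (pf h j) := h.choose_spec.choose_spec.1 j

lemma pf_union {S : Set (Vec n)} (h : IsPolyhedron S) : S = ⋃ j, pf h j :=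
  h.choose_spec.choose_spec.2

def tauP (F P Q : Set (Vec n)) : Set (Vec n) := P ∩ preflow F (bnd P Q ∩ preflow F Q)

variable {F U V : Set (Vec n)}

noncomputable def WP (hF : IsConvexPolyhedron F) (hFne : F.Nonempty) (hU : IsPolyhedron U)
    {a : ℕ} (D : Fin a → Set (Vec n)) (hD : ∀ i, IsConvexPolyhedron (D i)) :
    ℕ → {S : Set (Vec n) // IsPolyhedron S}
  | 0 => ⟨U, hU⟩
  | (m+1) =>
      let W := WP hF hFne hU D hD m
      ⟨W.1 ∪ ⋃ (i : Fin a) (j : Fin (pk W.2)), tauP F (D i) (pf W.2 j),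
        W.2.union (isPolyhedron_union_fintype fun i => isPolyhedron_union_fintype fun j =>
          tauPiece_isPolyhedron hF hFne (hD i) (pf_cp W.2 j))⟩

variable (hF : IsConvexPolyhedron F) (hFne : F.Nonempty) (hU : IsPolyhedron U)
    {a : ℕ} (D : Fin a → Set (Vec n)) (hD : ∀ i, IsConvexPolyhedron (D i))

lemma WP_zero : (WP hF hFne hU D hD 0).1 = U := rfl

lemma WP_succ (m : ℕ) : (WP hF hFne hU D hD (m+1)).1 =
    (WP hF hFne hU D hD m).1 ∪ ⋃ (i : Fin a) (j : Fin (pk (WP hF hFne hU D hD m).2)),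
      tauP F (D i) (pf (WP hF hFne hU D hD m).2 j) := rfl

lemma WP_le {m m' : ℕ} (h : m ≤ m') :
    (WP hF hFne hU D hD m).1 ⊆ (WP hF hFne hU D hD m').1 := by
  induction m' with
  | zero => rw [Nat.le_zero.1 h]
  | succ m' ih =>
    rcases Nat.lt_or_ge m (m'+1) with h' | h'
    · refine subset_trans (ih (Nat.lt_succ_iff.1 h')) ?_
      rw [WP_succ]
      exact subset_union_left
    · rw [le_antisymm h h']

lemma WP_step {m : ℕ} {i : Fin a} {j : Fin (pk (WP hF hFne hU D hD m).2)} {u : Vec n}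
    (h1 : u ∈ D i)
    (h2 : u ∈ preflow F (bnd (D i) (pf (WP hF hFne hU D hD m).2 j) ∩
      preflow F (pf (WP hF hFne hU D hD m).2 j))) :
    u ∈ (WP hF hFne hU D hD (m+1)).1 := by
  rw [WP_succ]
  exact Or.inr (mem_iUnion.2 ⟨i, mem_iUnion.2 ⟨j, ⟨h1, h2⟩⟩⟩)

lemma WP_sub_tau (hDV : ∀ i, D i ⊆ Vᶜ) (W' : Set (Vec n)) (hW' : TauClosed F U V W') :
    ∀ m, (WP hF hFne hU D hD m).1 ⊆ W' := by
  intro m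
  induction m with
  | zero => exact hW'.1
  | succ m ih =>
    rw [WP_succ]
    refine union_subset ih (iUnion_subset fun i => iUnion_subset fun j => ?_)
    have hQW : pf (WP hF hFne hU D hD m).2 j ⊆ W' := by
      intro x hx
      apply ih
      rw [pf_union (WP hF hFne hU D hD m).2]
      exact mem_iUnion.2 ⟨j, hx⟩
    exact hW'.2.2 (D i) (pf (WP hF hFne hU D hD m).2 j) (hD i) (hDV i) (pf_cp _ j) hQW

lemma WP_sub_prwa (hDV : ∀ i, D i ⊆ Vᶜ) :
    ∀ m, (WP hF hFne hU D hD m).1 ⊆ prwa F U V := by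
  intro m
  induction m with
  | zero => exact U_subset_prwa
  | succ m ih =>
    rw [WP_succ]
    refine union_subset ih (iUnion_subset fun i => iUnion_subset fun j => ?_)
    have hQW : pf (WP hF hFne hU D hD m).2 j ⊆ prwa F U V := by
      intro x hx
      apply ih
      rw [pf_union (WP hF hFne hU D hD m).2]
      exact mem_iUnion.2 ⟨j, hx⟩
    exact prwa_tau hFne (hD i) (hDV i) (pf_cp _ j) hQW

/-- The main decomposition claim: a trajectory whose points lie in `U` or patches from `A`
witnesses membership in the `(A.card + 1)`-th stage of the construction. -/
lemma WP_claim : ∀ (m : ℕ) (A : Finset (Fin a)), A.card ≤ m →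
    ∀ (u : Vec n) (L : List (ℝ × Vec n)), Ok F U V u L →
    (∀ t, 0 ≤ t → t ≤ dur L → curve u L t ∈ U ∨ ∃ i ∈ A, curve u L t ∈ D i) →
    u ∈ (WP hF hFne hU D hD (m+1)).1 := by
  intro m
  induction m with
  | zero =>
    intro A hA u L hOk hGood
    have h0 := hGood 0 le_rfl (dur_nonneg hOk.nn)
    rw [curve_zero hOk.nn] at h0
    rcases h0 with h | ⟨i, hi, _⟩
    · exact WP_le hF hFne hU D hD (Nat.zero_le 1) h
    · rw [Nat.le_zero] at hA
      rw [Finset.card_eq_zero.1 hA] at hi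
      exact absurd hi (Finset.notMem_empty i)
  | succ m IH =>
    intro A hA u L hOk hGood
    have h0 := hGood 0 le_rfl (dur_nonneg hOk.nn)
    rw [curve_zero hOk.nn] at h0
    rcases h0 with hU0 | ⟨i, hiA, hiD⟩
    · exact WP_le hF hFne hU D hD (Nat.zero_le (m+2)) hU0
    set Δ := dur L with hΔ
    set S := {t : ℝ | 0 ≤ t ∧ t ≤ Δ ∧ curve u L t ∈ D i} with hSdef
    have hS0 : (0:ℝ) ∈ S := ⟨le_rfl, dur_nonneg hOk.nn, by rw [curve_zero hOk.nn]; exact hiD⟩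
    have hSbdd : BddAbove S := ⟨Δ, fun t ht => ht.2.1⟩
    set s := sSup S with hs
    have hs0 : 0 ≤ s := le_csSup hSbdd hS0
    have hsΔ : s ≤ Δ := csSup_le ⟨0, hS0⟩ (fun t ht => ht.2.1)
    have hafter : ∀ t, s < t → t ≤ Δ → curve u L t ∉ D i := by
      intro t hst htΔ hDt
      exact absurd (le_csSup hSbdd ⟨by linarith, htΔ, hDt⟩) (not_le.2 hst)
    set z := curve u L s with hz
    have hzcl : z ∈ closure (D i) := by
      by_cases hsS : s ∈ S
      · exact subset_closure hsS.2.2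
      · have hspos : 0 < s := by
          rcases eq_or_lt_of_le hs0 with h | h
          · exact absurd (show s ∈ S by rw [← h]; exact hS0) hsS
          · exact h
        obtain ⟨ε, hε, hεs, c₂, hc₂, hbwd⟩ := curve_bwd hOk s hspos hsΔ
        apply mem_closure_line (v := -c₂)
        intro η hη
        have hmin : 0 < min η ε := lt_min hη hε
        obtain ⟨t, htS, hts⟩ := exists_lt_of_lt_csSup ⟨0, hS0⟩
          (show s - min η ε < s by linarith)
        have ht_le : t ≤ s := le_csSup hSbdd htS
        have hminη := min_le_left η ε
        have hminε := min_le_right η ε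
        refine ⟨s - t, by linarith, by linarith, ?_⟩
        have hb := hbwd (s - t) (by linarith) (by linarith)
        rw [show s - (s - t) = t by ring] at hb
        have : z + (s - t) • (-c₂) = z - (s - t) • c₂ := by
          rw [smul_neg, ← sub_eq_add_neg]
        rw [this, ← hb]
        exact htS.2.2
    obtain ⟨c', hc', huz⟩ := curve_displacement hF.convex hFne hOk 0 s le_rfl hs0 hsΔ
    rw [curve_zero hOk.nn, sub_zero] at huz
    -- huz : z = u + s • c'
    have step : ∀ (j : Fin (pk (WP hF hFne hU D hD (m+1)).2)),
        z ∈ bnd (D i) (pf (WP hF hFne hU D hD (m+1)).2 j) →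
        z ∈ preflow F (pf (WP hF hFne hU D hD (m+1)).2 j) →
        u ∈ (WP hF hFne hU D hD (m+2)).1 := by
      intro j hb hp
      refine WP_step hF hFne hU D hD (j := j) hiD ⟨s, hs0, c', hc', ?_⟩
      rw [← huz]
      exact ⟨hb, hp⟩
    obtain ⟨cF, hcF⟩ := id hFne
    by_cases hzU : z ∈ U
    · have hzW : z ∈ (WP hF hFne hU D hD (m+1)).1 :=
        WP_le hF hFne hU D hD (Nat.zero_le (m+1)) hzU
      rw [pf_union (WP hF hFne hU D hD (m+1)).2] at hzW
      obtain ⟨j, hj⟩ := mem_iUnion.1 hzW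
      exact step j (Or.inl ⟨hzcl, hj⟩) ⟨0, le_rfl, cF, hcF, by rw [zero_smul, add_zero]; exact hj⟩
    · have hsltΔ : s < Δ := by
        rcases eq_or_lt_of_le hsΔ with h | h
        · exact absurd (show z ∈ U by rw [hz, h]; exact curve_dur hOk) hzU
        · exact h
      have hcard : (A.erase i).card ≤ m := by
        rw [Finset.card_erase_of_mem hiA]
        omega
      have hrec : ∀ t, s < t → t ≤ Δ → curve u L t ∈ (WP hF hFne hU D hD (m+1)).1 := by
        intro t hst htΔ
        obtain ⟨L', hOk', hdur', hcurve'⟩ := curve_suffix hOk t (by linarith) htΔ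
        apply IH (A.erase i) hcard _ L' hOk'
        intro r hr0 hr1
        rw [hdur'] at hr1
        rw [hcurve' r hr0 hr1]
        rcases hGood (t + r) (by linarith) (by linarith) with h | ⟨i'', hi''A, hi''D⟩
        · exact Or.inl h
        · right
          refine ⟨i'', Finset.mem_erase.2 ⟨?_, hi''A⟩, hi''D⟩
          rintro rfl
          exact hafter (t+r) (by linarith) (by linarith) hi''D
      by_cases hzD : z ∈ D i
      · obtain ⟨ε, hε, c₁, hc₁, hfwd⟩ := curve_fwd hOk s hs0 hsltΔ
        have hε''pos : 0 < min ε (Δ - s) := lt_min hε (by linarith)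
        have hcov : ∀ r, 0 < r → r ≤ min ε (Δ - s) →
            ∃ j, z + r • c₁ ∈ pf (WP hF hFne hU D hD (m+1)).2 j := by
          intro r h0r hrε
          have hm1 := min_le_left ε (Δ - s)
          have hm2 := min_le_right ε (Δ - s)
          have h1 : curve u L (s + r) ∈ (WP hF hFne hU D hD (m+1)).1 :=
            hrec (s+r) (by linarith) (by linarith)
          rw [hfwd r h0r.le (by linarith), ← hz] at h1
          rw [pf_union (WP hF hFne hU D hD (m+1)).2] at h1
          exact mem_iUnion.1 h1
        obtain ⟨j, ε', hε'0, hε'le, hmem⟩ := interval_pigeonhole _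
          (fun j => (pf_cp (WP hF hFne hU D hD (m+1)).2 j).convex) z c₁ hε''pos hcov
        refine step j (Or.inr ⟨hzD, ?_⟩) ⟨ε', hε'0.le, c₁, hc₁, hmem ε' hε'0 le_rfl⟩
        apply mem_closure_line (v := c₁)
        intro η hη
        exact ⟨min η ε', le_of_lt (lt_min hη hε'0), min_le_left _ _,
          hmem _ (lt_min hη hε'0) (min_le_right _ _)⟩
      · rcases hGood s hs0 hsΔ with h | ⟨i', hi'A, hi'D⟩
        · exact absurd (by rw [hz]; exact h) hzU
        rw [← hz] at hi'D
        have hi'ne : i' ≠ i := fun h => hzD (h ▸ hi'D)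
        obtain ⟨L', hOk', hdur', hcurve'⟩ := curve_suffix hOk s hs0 hsΔ
        rw [← hz] at hOk' hcurve'
        have hzW : z ∈ (WP hF hFne hU D hD (m+1)).1 := by
          apply IH (A.erase i) hcard _ L' hOk'
          intro r hr0 hr1
          rw [hdur'] at hr1
          rw [hcurve' r hr0 hr1]
          rcases eq_or_lt_of_le hr0 with h | h
          · rw [← h, add_zero, ← hz]
            exact Or.inr ⟨i', Finset.mem_erase.2 ⟨hi'ne, hi'A⟩, hi'D⟩
          · rcases hGood (s + r) (by linarith) (by linarith) with hx | ⟨i'', hi''A, hi''D⟩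
            · exact Or.inl hx
            · right
              refine ⟨i'', Finset.mem_erase.2 ⟨?_, hi''A⟩, hi''D⟩
              rintro rfl
              exact hafter (s+r) (by linarith) (by linarith) hi''D
        rw [pf_union (WP hF hFne hU D hD (m+1)).2] at hzW
        obtain ⟨j, hj⟩ := mem_iUnion.1 hzW
        exact step j (Or.inl ⟨hzcl, hj⟩)
          ⟨0, le_rfl, cF, hcF, by rw [zero_smul, add_zero]; exact hj⟩

lemma prwa_eq_WP (hDV : ∀ i, D i ⊆ Vᶜ) (hDU : Vᶜ = ⋃ i, D i) :
    prwa F U V = (WP hF hFne hU D hD (a+1)).1 := by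
  apply Subset.antisymm
  · intro u hu
    obtain ⟨L, hOk⟩ := ok_of_prwa hu
    refine WP_claim hF hFne hU D hD a Finset.univ (by rw [Finset.card_univ, Fintype.card_fin])
      u L hOk ?_
    intro t ht0 ht1
    rcases curve_safe hOk ht0 ht1 with h | h
    · rw [hDU] at h
      obtain ⟨i, hi⟩ := mem_iUnion.1 h
      exact Or.inr ⟨i, Finset.mem_univ i, hi⟩
    · exact Or.inl h
  · exact WP_sub_prwa hF hFne hU D hD hDV (a+1)

end Construction

/-- For a nonempty convex polyhedron `F` and polyhedra `U, V`,
`prwa_F(U, V)` is the least `τ`-closed subset of `ℝ^n`. -/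
theorem prwa_least_tauClosed {n : ℕ} (F U V : Set (Vec n))
    (hF : IsConvexPolyhedron F) (hFne : F.Nonempty)
    (hU : IsPolyhedron U) (hV : IsPolyhedron V) :
    TauClosed F U V (prwa F U V) ∧ ∀ W : Set (Vec n), TauClosed F U V W → prwa F U V ⊆ W := by
  obtain ⟨a, D, hD, hDU⟩ := hV.compl
  have hDV : ∀ i, D i ⊆ Vᶜ := by
    intro i
    rw [hDU]
    exact subset_iUnion D i
  have heq := prwa_eq_WP hF hFne hU D hD hDV hDU
  constructor
  · refine ⟨U_subset_prwa, ?_, ?_⟩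
    · rw [heq]
      exact (WP hF hFne hU D hD (a+1)).2
    · intro P Q hP hPV hQ hQW
      exact prwa_tau hFne hP hPV hQ hQW
  · intro W' hW'
    rw [heq]
    exact WP_sub_tau hF hFne hU D hD hDV W' hW' (a+1)
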